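/- (Boundedness of the cumulative penalty.) In every run of Algorithm 1, for every learning-rate index j ∈ [M] one has L_{T+1}(j) ≤ 2 + K·T·ε ≤ 2 + 1/(M·T²); consequently Σ_{j∈[M]} L_{T+1}(j) ≤ 2M + 1. -/

import Mathlib

open Finset

namespace OMS

/-- Number of learning rates: `M = ⌈log₂ T²⌉`. -/
def numLR (T : ℕ) : ℕ := Nat.clog 2 (T ^ 2)

/-- Learning rate `η(j) = 2^j / (16 T)`; `j : Fin (numLR T)` represents index `j+1 ∈ [M]`. -/
noncomputable def lr (T : ℕ) (j : Fin (numLR T)) : ℝ := 2 ^ ((j : ℕ) + 1) / (16 * T)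

/-- Lower threshold `ε = 1/(K·M·T³)`. -/
noncomputable def epsLB (K T : ℕ) : ℝ := 1 / (K * numLR T * T ^ 3)

/-- Probability simplex on `Fin K`. -/
def simplex (K : ℕ) : Set (Fin K → ℝ) :=
  {p | (∀ i, 0 ≤ p i) ∧ ∑ i, p i = 1}

/-- Probability simplex on expert × learning-rate pairs. -/
def simplex2 (K T : ℕ) : Set (Fin K → Fin (numLR T) → ℝ) :=
  {w | (∀ i j, 0 ≤ w i j) ∧ ∑ i, ∑ j, w i j = 1}

/-- Weighted negative-entropy regularizer `ψ`. -/
noncomputable def psi (K T : ℕ) (w : Fin K → Fin (numLR T) → ℝ) : ℝ :=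
  ∑ i, ∑ j, (1 / lr T j) * w i j * Real.log (w i j)

/-- Bregman divergence `D_ψ(y,x)` of the weighted negative-entropy regularizer. -/
noncomputable def breg (K T : ℕ) (y x : Fin K → Fin (numLR T) → ℝ) : ℝ :=
  psi K T y - psi K T x -
    ∑ i, ∑ j, (1 / lr T j) * (Real.log (x i j) + 1) * (y i j - x i j)

/-- Decision set `Ω` for an active set `J` of learning rates. -/
def decisionSet (K T : ℕ) (J : Set (Fin (numLR T))) :
    Set (Fin K → Fin (numLR T) → ℝ) :=
  {w | w ∈ simplex2 K T ∧ (∀ i, ∀ j ∈ J, epsLB K T ≤ w i j) ∧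
      (∀ i, ∀ j, j ∉ J → w i j = epsLB K T)}

/-- A run of Algorithm 1: trajectories of losses, predictions, weights, penalties
and played distributions. -/
structure Run (K T : ℕ) where
  loss : ℕ → Fin K → ℝ
  pred : ℕ → Fin K → ℝ
  w' : ℕ → Fin K → Fin (numLR T) → ℝ
  w : ℕ → Fin K → Fin (numLR T) → ℝ
  L : ℕ → Fin (numLR T) → ℝ
  p : ℕ → Fin K → ℝ

variable {K T : ℕ}

/-- Prediction error `r_t(i) = ℓ_t(i) − m_t(i)`. -/
def Run.r (R : Run K T) (t : ℕ) (i : Fin K) : ℝ := R.loss t i - R.pred t i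

/-- Active set `𝒥_t = {j : L_t(j) ≤ 1}`. -/
def Run.Jset (R : Run K T) (t : ℕ) : Set (Fin (numLR T)) := {j | R.L t j ≤ 1}

open Classical in
/-- Active set `𝒥_t` as a finite set. -/
noncomputable def Run.Jfin (R : Run K T) (t : ℕ) : Finset (Fin (numLR T)) :=
  Finset.univ.filter fun j => R.L t j ≤ 1

/-- Correction term `a_t(i,j) = 32 η(j) r_t(i)²`. -/
noncomputable def Run.corr (R : Run K T) (t : ℕ) (i : Fin K) (j : Fin (numLR T)) : ℝ :=
  32 * lr T j * (R.r t i) ^ 2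

open Classical in
/-- The constraints defining a run of Algorithm 1. -/
structure IsRun (R : Run K T) : Prop where
  loss_mem : ∀ t ∈ Finset.Icc 1 T, ∀ i, R.loss t i ∈ Set.Icc (0 : ℝ) 1
  pred_mem : ∀ t ∈ Finset.Icc 1 T, ∀ i, R.pred t i ∈ Set.Icc (0 : ℝ) 1
  w'_init : ∀ i j, R.w' 1 i j = lr T j ^ 2 / (K * ∑ j', lr T j' ^ 2)
  L_init : ∀ j, R.L 1 j = 0
  w_mem : ∀ t ∈ Finset.Icc 1 T, R.w t ∈ decisionSet K T (R.Jset t)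
  w_min : ∀ t ∈ Finset.Icc 1 T, ∀ v ∈ decisionSet K T (R.Jset t),
      (∑ i, ∑ j, R.pred t i * R.w t i j) + breg K T (R.w t) (R.w' t) ≤
      (∑ i, ∑ j, R.pred t i * v i j) + breg K T v (R.w' t)
  p_def : ∀ t ∈ Finset.Icc 1 T, ∀ i, R.p t i =
      (∑ j ∈ R.Jfin t, R.w t i j) / (∑ i', ∑ j ∈ R.Jfin t, R.w t i' j)
  w'_mem : ∀ t ∈ Finset.Icc 1 T, R.w' (t + 1) ∈ decisionSet K T (R.Jset t)
  w'_min : ∀ t ∈ Finset.Icc 1 T, ∀ v ∈ decisionSet K T (R.Jset t),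
      (∑ i, ∑ j, (R.loss t i + R.corr t i j) * R.w' (t + 1) i j) +
        breg K T (R.w' (t + 1)) (R.w' t) ≤
      (∑ i, ∑ j, (R.loss t i + R.corr t i j) * v i j) + breg K T v (R.w' t)
  L_upd : ∀ t ∈ Finset.Icc 1 T, ∀ j, R.L (t + 1) j = R.L t j +
      ∑ i, (if 1 < 32 * lr T j * |R.r t i| then R.w t i j * R.r t i else 0)

end OMS


open OMS in
lemma OMS.eps_nonneg (K T : ℕ) : 0 ≤ epsLB K T := by
  unfold epsLB; positivity

open OMS in
lemma OMS.step_bound {K T : ℕ} {R : Run K T} (hR : IsRun R)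
    {t : ℕ} (ht : t ∈ Finset.Icc 1 T) (j : Fin (numLR T)) :
    R.L (t + 1) j ≤ max (R.L t j + K * epsLB K T) 2 := by
  have habs : ∀ i, |R.r t i| ≤ 1 := by
    intro i
    have h1 := hR.loss_mem t ht i
    have h2 := hR.pred_mem t ht i
    rw [abs_le]
    constructor <;> simp only [Run.r] <;>
      [linarith [h1.1, h2.2]; linarith [h1.2, h2.1]]
  obtain ⟨⟨hnn, hsum⟩, _hge, heq⟩ := hR.w_mem t ht
  rw [hR.L_upd t ht j]
  by_cases hj : R.L t j ≤ 1
  · -- active case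
    have hterm : ∀ i, (if 1 < 32 * lr T j * |R.r t i| then R.w t i j * R.r t i else 0)
        ≤ R.w t i j := by
      intro i
      split
      · nlinarith [hnn i j, habs i, le_abs_self (R.r t i)]
      · exact hnn i j
    have hsum2 : ∑ i, R.w t i j ≤ 1 := by
      rw [← hsum]
      refine Finset.sum_le_sum fun i _ => ?_
      exact Finset.single_le_sum (fun j' _ => hnn i j') (Finset.mem_univ j)
    have h3 : ∑ i, (if 1 < 32 * lr T j * |R.r t i| then R.w t i j * R.r t i else 0) ≤ 1 :=
      le_trans (Finset.sum_le_sum fun i _ => hterm i) hsum2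
    have : R.L t j + ∑ i, (if 1 < 32 * lr T j * |R.r t i| then R.w t i j * R.r t i else 0)
        ≤ 2 := by linarith
    exact le_trans this (le_max_right _ _)
  · -- inactive case
    have hj' : j ∉ R.Jset t := hj
    have hterm : ∀ i, (if 1 < 32 * lr T j * |R.r t i| then R.w t i j * R.r t i else 0)
        ≤ epsLB K T := by
      intro i
      rw [heq i j hj']
      split
      · nlinarith [eps_nonneg K T, habs i, le_abs_self (R.r t i)]
      · exact eps_nonneg K T
    have h3 : ∑ i, (if 1 < 32 * lr T j * |R.r t i| then R.w t i j * R.r t i else 0)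
        ≤ K * epsLB K T := by
      calc ∑ i, (if 1 < 32 * lr T j * |R.r t i| then R.w t i j * R.r t i else 0)
          ≤ ∑ _i : Fin K, epsLB K T := Finset.sum_le_sum fun i _ => hterm i
        _ = K * epsLB K T := by simp [Finset.sum_const, mul_comm]
    exact le_trans (by linarith : R.L t j + _ ≤ R.L t j + K * epsLB K T) (le_max_left _ _)

open OMS in
/-- Boundedness of the cumulative penalty in Algorithm 1. -/
theorem cumulative_penalty_bound (K T : ℕ) (hK : 1 ≤ K) (hT : 2 ≤ T)
    (R : OMS.Run K T) (hR : OMS.IsRun R) :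
    (∀ j : Fin (OMS.numLR T),
      R.L (T + 1) j ≤ 2 + (K : ℝ) * T * OMS.epsLB K T ∧
      2 + (K : ℝ) * T * OMS.epsLB K T ≤ 2 + 1 / ((OMS.numLR T : ℝ) * (T : ℝ) ^ 2)) ∧
    ∑ j, R.L (T + 1) j ≤ 2 * (OMS.numLR T : ℝ) + 1 := by
  have hε : 0 ≤ epsLB K T := eps_nonneg K T
  have hKε : 0 ≤ (K : ℝ) * epsLB K T := by positivity
  have key : ∀ t, t ≤ T → ∀ j, R.L (t + 1) j ≤ 2 + (K : ℝ) * t * epsLB K T := by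
    intro t
    induction t with
    | zero =>
      intro _ j
      rw [hR.L_init j]
      norm_num
    | succ t ih =>
      intro ht j
      have ht' : t + 1 ∈ Finset.Icc 1 T := by
        simp [Finset.mem_Icc]; omega
      have h1 := step_bound hR ht' j
      have h2 := ih (by omega) j
      refine le_trans h1 (max_le ?_ ?_)
      · push_cast
        nlinarith
      · have : 0 ≤ (K : ℝ) * (t + 1 : ℕ) * epsLB K T := by positivity
        linarith
  have hM : 0 < numLR T := by
    apply Nat.clog_pos one_lt_two
    nlinarith
  have hT0 : (0 : ℝ) < T := by positivity
  have hK0 : (0 : ℝ) < K := by exact_mod_cast Nat.lt_of_lt_of_le Nat.zero_lt_one hK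
  have hM0 : (0 : ℝ) < numLR T := by exact_mod_cast hM
  have heps : (K : ℝ) * T * epsLB K T = 1 / ((numLR T : ℝ) * (T : ℝ) ^ 2) := by
    unfold epsLB
    field_simp
  have hper : ∀ j : Fin (numLR T),
      R.L (T + 1) j ≤ 2 + (K : ℝ) * T * epsLB K T ∧
      2 + (K : ℝ) * T * epsLB K T ≤ 2 + 1 / ((numLR T : ℝ) * (T : ℝ) ^ 2) := by
    intro j
    exact ⟨key T le_rfl j, by rw [heps]⟩
  refine ⟨hper, ?_⟩
  have hsum : ∑ j, R.L (T + 1) j ≤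
      ∑ _j : Fin (numLR T), (2 + 1 / ((numLR T : ℝ) * (T : ℝ) ^ 2)) :=
    Finset.sum_le_sum fun j _ => le_trans (hper j).1 (hper j).2
  have hcard : (Finset.univ : Finset (Fin (numLR T))).card = numLR T := by simp
  rw [Finset.sum_const, hcard, nsmul_eq_mul] at hsum
  have hfrac : (numLR T : ℝ) * (2 + 1 / ((numLR T : ℝ) * (T : ℝ) ^ 2)) =
      2 * (numLR T : ℝ) + 1 / (T : ℝ) ^ 2 := by
    field_simp
  have hT2 : (2 : ℝ) ≤ T := by exact_mod_cast hT
  have hlast : 1 / (T : ℝ) ^ 2 ≤ 1 := by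
    rw [div_le_one (by positivity)]
    nlinarith
  rw [hfrac] at hsum
  linarith
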